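/- Let p and q be odd prime numbers. Then there is no pair (w, z) ∈ ℚ₂ × ℚ₂ satisfying 2w² = 4 − pq·z⁴. -/

import Mathlib

lemma val_eq_of_norm_eq {x y : ℚ_[2]} (hx : x ≠ 0) (hy : y ≠ 0) (h : ‖x‖ = ‖y‖) :
    x.valuation = y.valuation := by
  rw [Padic.norm_eq_zpow_neg_valuation hx, Padic.norm_eq_zpow_neg_valuation hy] at h
  have := zpow_right_injective₀ (by norm_num : (0:ℝ) < 2) (by norm_num) (by exact_mod_cast h)
  omega

/-- For odd primes `p, q`, the equation `2w² = 4 − pq·z⁴` has no solution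
`(w, z) ∈ ℚ₂ × ℚ₂`. -/
theorem stmt6 (p q : ℕ) (hp : p.Prime) (hq : q.Prime) (hp2 : p ≠ 2) (hq2 : q ≠ 2) :
    ¬∃ w z : ℚ_[2], 2 * w ^ 2 = 4 - (p : ℚ_[2]) * (q : ℚ_[2]) * z ^ 4 := by
  rintro ⟨w, z, h⟩
  have hp0 : (p : ℚ_[2]) ≠ 0 := Nat.cast_ne_zero.mpr hp.pos.ne'
  have hq0 : (q : ℚ_[2]) ≠ 0 := Nat.cast_ne_zero.mpr hq.pos.ne'
  have hvp : (p : ℚ_[2]).valuation = 0 := by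
    rw [Padic.valuation_natCast, padicValNat.eq_zero_of_not_dvd]
    · simp
    · intro hd
      exact hp2 ((Nat.prime_dvd_prime_iff_eq Nat.prime_two hp).mp hd).symm
  have hvq : (q : ℚ_[2]).valuation = 0 := by
    rw [Padic.valuation_natCast, padicValNat.eq_zero_of_not_dvd]
    · simp
    · intro hd
      exact hq2 ((Nat.prime_dvd_prime_iff_eq Nat.prime_two hq).mp hd).symm
  have hv2 : (2 : ℚ_[2]).valuation = 1 := by
    have := Padic.valuation_p (p := 2)
    exact_mod_cast this
  have hv4 : (4 : ℚ_[2]).valuation = 2 := by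
    have h4 : (4 : ℚ_[2]) = 2 * 2 := by norm_num
    rw [h4, Padic.valuation_mul (by norm_num) (by norm_num), hv2]; norm_num
  -- valuation of pq z^4, when z ≠ 0
  have hval_pqz : ∀ hz : z ≠ 0,
      ((p : ℚ_[2]) * (q : ℚ_[2]) * z ^ 4).valuation = 4 * z.valuation := by
    intro hz
    have hz4 : z ^ 4 ≠ 0 := pow_ne_zero _ hz
    rw [Padic.valuation_mul (mul_ne_zero hp0 hq0) hz4,
      Padic.valuation_mul hp0 hq0, hvp, hvq]
    have : (z ^ 4).valuation = 4 * z.valuation := by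
      have h4 : z ^ 4 = z * (z * (z * z)) := by ring
      rw [h4, Padic.valuation_mul hz (mul_ne_zero hz (mul_ne_zero hz hz)),
        Padic.valuation_mul hz (mul_ne_zero hz hz),
        Padic.valuation_mul hz hz]
      ring
    rw [this]; ring
  by_cases hw : w = 0
  · -- 0 = 4 - pq z^4
    subst hw
    simp only [ne_eq, OfNat.ofNat_ne_zero, not_false_eq_true, zero_pow, mul_zero] at h
    have hz : z ≠ 0 := by
      rintro rfl
      norm_num at h
    have heq : (p : ℚ_[2]) * (q : ℚ_[2]) * z ^ 4 = 4 := by linear_combination h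
    have := hval_pqz hz
    rw [heq, hv4] at this
    omega
  · have hw2 : w ^ 2 ≠ 0 := pow_ne_zero _ hw
    have hlhs : (2 * w ^ 2 : ℚ_[2]).valuation = 1 + 2 * w.valuation := by
      rw [Padic.valuation_mul (by norm_num) hw2, hv2]
      have : (w ^ 2).valuation = 2 * w.valuation := by
        rw [sq, Padic.valuation_mul hw hw]; ring
      rw [this]
    by_cases hz : z = 0
    · subst hz
      norm_num at h
      rw [h, hv4] at hlhs
      omega
    · set B := (p : ℚ_[2]) * (q : ℚ_[2]) * z ^ 4 with hB
      have hB0 : B ≠ 0 := mul_ne_zero (mul_ne_zero hp0 hq0) (pow_ne_zero _ hz)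
      have hvB : B.valuation = 4 * z.valuation := hval_pqz hz
      have hvne : (4 : ℚ_[2]).valuation ≠ B.valuation := by
        rw [hv4, hvB]; omega
      have hnne : ‖(4 : ℚ_[2])‖ ≠ ‖B‖ := fun hn => hvne (val_eq_of_norm_eq (by norm_num) hB0 hn)
      have hsub : (4 - B : ℚ_[2]) = 4 + (-B) := by ring
      have hmax : ‖(4 - B : ℚ_[2])‖ = max ‖(4 : ℚ_[2])‖ ‖B‖ := by
        rw [hsub, Padic.add_eq_max_of_ne (by rwa [norm_neg]), norm_neg]
      have hne0 : (4 - B : ℚ_[2]) ≠ 0 := by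
        rw [← h]; exact mul_ne_zero (by norm_num) hw2
      rcases le_total ‖(4 : ℚ_[2])‖ ‖B‖ with hle | hle
      · have : ‖(4 - B : ℚ_[2])‖ = ‖B‖ := by rw [hmax, max_eq_right hle]
        have hv := val_eq_of_norm_eq hne0 hB0 this
        rw [← h, hlhs, hvB] at hv
        omega
      · have : ‖(4 - B : ℚ_[2])‖ = ‖(4 : ℚ_[2])‖ := by rw [hmax, max_eq_left hle]
        have hv := val_eq_of_norm_eq hne0 (by norm_num) this
        rw [← h, hlhs, hv4] at hv
        omega
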